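/- Let A be a positive semi-definite real symmetric n×n matrix. Then per(A) ≥ ∏_{i=1}^{n} a_{ii} ≥ 0; moreover a_{ii} a_{jj} ≥ a_{ij}^2 for all i, j, and every principal submatrix A[S,S] is positive semi-definite, so per(A[S,S]) ≥ 0 for all S ⊆ [n]. -/

import Mathlib

/-- The permanent of a (possibly rectangular) matrix whose rows and columns are indexed by
finite types: the sum over all bijections `e : ι ≃ κ` of `∏ i, M i (e i)`.
For a square matrix this is the usual permanent `∑_{σ ∈ S_n} ∏_{i} M i (σ i)`. -/
noncomputable def Matrix.per {ι κ R : Type*} [Fintype ι] [Fintype κ] [DecidableEq ι]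
    [DecidableEq κ] [CommSemiring R] (M : Matrix ι κ R) : R :=
  ∑ e : ι ≃ κ, ∏ i, M i (e i)

set_option maxHeartbeats 1000000

namespace Stmt17

open Finset Nat

variable {n m : ℕ}

noncomputable def gram (b : Fin n → Fin m → ℝ) : Matrix (Fin n) (Fin n) ℝ :=
  Matrix.of fun i j => ∑ k, b i k * b j k

lemma gram_apply (b : Fin n → Fin m → ℝ) (i j : Fin n) :
    gram b i j = ∑ k, b i k * b j k := rfl

noncomputable def XS (b : Fin n → Fin m → ℝ) (f : Fin n → Fin m) : ℝ :=
  ∑ σ : Equiv.Perm (Fin n), ∏ i, b i (f (σ i))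

lemma XS_comp_perm (b : Fin n → Fin m → ℝ) (f : Fin n → Fin m) (τ : Equiv.Perm (Fin n)) :
    XS b (f ∘ τ) = XS b f := by
  have := Equiv.sum_comp (Equiv.mulLeft τ)
    (fun σ : Equiv.Perm (Fin n) => ∏ i, b i (f (σ i)))
  simpa [XS, Function.comp, Equiv.Perm.mul_apply] using this

lemma per_gram_expand (b : Fin n → Fin m → ℝ) :
    (gram b).per = ∑ e : Equiv.Perm (Fin n), ∑ f : Fin n → Fin m,
      (∏ i, b i (f i)) * ∏ i, b i (f (e i)) := by
  unfold Matrix.per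
  calc ∑ e : Fin n ≃ Fin n, ∏ i, gram b i (e i)
      = ∑ e : Fin n ≃ Fin n, ∑ f : Fin n → Fin m,
          (∏ i, b i (f i)) * ∏ i, b (e i) (f i) := by
        refine Finset.sum_congr rfl fun e _ => ?_
        rw [show (∏ i, gram b i (e i)) = ∑ f : Fin n → Fin m,
            ∏ i, (b i (f i) * b (e i) (f i)) from
          Fintype.prod_sum (fun i k => b i k * b (e i) k)]
        exact Finset.sum_congr rfl fun f _ => Finset.prod_mul_distrib
    _ = ∑ e : Fin n ≃ Fin n, ∑ f : Fin n → Fin m,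
          (∏ i, b i (f i)) * ∏ i, b i (f (e.symm i)) := by
        refine Finset.sum_congr rfl fun e _ => Finset.sum_congr rfl fun f _ => ?_
        congr 1
        calc ∏ i, b (e i) (f i) = ∏ i, b (e i) (f (e.symm (e i))) :=
              Finset.prod_congr rfl fun i _ => by rw [Equiv.symm_apply_apply]
          _ = ∏ i, b i (f (e.symm i)) := Equiv.prod_comp e (fun j => b j (f (e.symm j)))
    _ = ∑ e : Equiv.Perm (Fin n), ∑ f : Fin n → Fin m,
          (∏ i, b i (f i)) * ∏ i, b i (f (e i)) := by
        have := Equiv.sum_comp (Equiv.inv (Equiv.Perm (Fin n)))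
          (fun e : Equiv.Perm (Fin n) => ∑ f : Fin n → Fin m,
            (∏ i, b i (f i)) * ∏ i, b i (f (e i)))
        simpa [Equiv.inv_apply] using this

lemma sum_XS_sq (b : Fin n → Fin m → ℝ) :
    ∑ f : Fin n → Fin m, XS b f ^ 2 = (n ! : ℝ) * (gram b).per := by
  have hfix : ∀ σ : Equiv.Perm (Fin n),
      (∑ f : Fin n → Fin m, (∏ i, b i (f (σ i))) * XS b f)
        = ∑ f : Fin n → Fin m, (∏ i, b i (f i)) * XS b f := by
    intro σ
    have := Equiv.sum_comp (Equiv.arrowCongr σ (Equiv.refl (Fin m)))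
      (fun f : Fin n → Fin m => (∏ i, b i (f (σ i))) * XS b f)
    rw [← this]
    refine Finset.sum_congr rfl fun f _ => ?_
    have h2 : (Equiv.arrowCongr σ (Equiv.refl (Fin m))) f
        = f ∘ ⇑(σ.symm : Equiv.Perm (Fin n)) := by
      funext x; simp
    rw [h2, XS_comp_perm]
    congr 1
    exact Finset.prod_congr rfl fun i _ => by simp
  calc ∑ f : Fin n → Fin m, XS b f ^ 2
      = ∑ f : Fin n → Fin m, ∑ σ : Equiv.Perm (Fin n),
          (∏ i, b i (f (σ i))) * XS b f := by
        refine Finset.sum_congr rfl fun f _ => ?_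
        rw [pow_two, XS, Finset.sum_mul]
    _ = ∑ σ : Equiv.Perm (Fin n), ∑ f : Fin n → Fin m,
          (∏ i, b i (f (σ i))) * XS b f := Finset.sum_comm
    _ = ∑ σ : Equiv.Perm (Fin n), ∑ f : Fin n → Fin m,
          (∏ i, b i (f i)) * XS b f := Finset.sum_congr rfl fun σ _ => hfix σ
    _ = (n ! : ℝ) * ∑ f : Fin n → Fin m, (∏ i, b i (f i)) * XS b f := by
        rw [Finset.sum_const, nsmul_eq_mul, Finset.card_univ, Fintype.card_perm,
          Fintype.card_fin]
    _ = (n ! : ℝ) * (gram b).per := by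
        rw [per_gram_expand]
        congr 1
        rw [Finset.sum_comm]
        refine Finset.sum_congr rfl fun f _ => ?_
        rw [XS, Finset.mul_sum]

end Stmt17

namespace Stmt17
open Finset Nat

variable {n m : ℕ}

lemma XS_decomp (b : Fin (n+1) → Fin m → ℝ) (g : Fin (n+1) → Fin m) :
    XS b g = ∑ p : Fin (n+1), b 0 (g p) *
      XS (fun j => b j.succ) (fun j => g (Equiv.swap 0 p j.succ)) := by
  rw [XS, ← Equiv.sum_comp (Equiv.Perm.decomposeFin.symm)
      (fun σ : Equiv.Perm (Fin (n+1)) => ∏ i, b i (g (σ i))), Fintype.sum_prod_type]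
  refine Finset.sum_congr rfl fun p _ => ?_
  rw [XS, Finset.mul_sum]
  refine Finset.sum_congr rfl fun e _ => ?_
  rw [Fin.prod_univ_succ]
  simp

lemma exists_perm_comp {k : ℕ} {α : Type*} [Fintype α] [DecidableEq α] {f g : Fin k → α}
    (hf : Function.Injective f) (hg : Function.Injective g) {x : α}
    (hcard : Fintype.card α = k + 1)
    (hfx : ∀ j, f j ≠ x) (hgx : ∀ j, g j ≠ x) : ∃ τ : Equiv.Perm (Fin k), f = g ∘ τ := by
  have hc : Fintype.card {y : α // y ≠ x} = k := by
    have := Fintype.card_subtype_compl (fun y : α => y = x)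
    rw [Fintype.card_subtype_eq, hcard] at this
    simpa using this
  set F : Fin k → {y : α // y ≠ x} := fun j => ⟨f j, hfx j⟩ with hF
  set G : Fin k → {y : α // y ≠ x} := fun j => ⟨g j, hgx j⟩ with hG
  have hFi : Function.Injective F := fun a b hab => hf (congrArg Subtype.val hab)
  have hGi : Function.Injective G := fun a b hab => hg (congrArg Subtype.val hab)
  have hFb : Function.Bijective F := by
    rw [Fintype.bijective_iff_injective_and_card]
    exact ⟨hFi, by simp [hc]⟩
  have hGb : Function.Bijective G := by
    rw [Fintype.bijective_iff_injective_and_card]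
    exact ⟨hGi, by simp [hc]⟩
  refine ⟨(Equiv.ofBijective F hFb).trans (Equiv.ofBijective G hGb).symm, ?_⟩
  funext j
  have : G (((Equiv.ofBijective F hFb).trans (Equiv.ofBijective G hGb).symm) j) = F j :=
    (Equiv.ofBijective G hGb).apply_symm_apply (F j)
  simpa [hF, hG, Subtype.ext_iff] using this.symm

lemma XS_reorder (b : Fin (n+1) → Fin m → ℝ) (f : Fin (n+1) → Fin m) (j₀ : Fin (n+1)) :
    XS b f = XS b (Fin.cons (f j₀) (f ∘ j₀.succAbove)) := by
  have hinj : Function.Injective (Fin.cons j₀ j₀.succAbove : Fin (n+1) → Fin (n+1)) := by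
    rw [Fin.cons_injective_iff]
    exact ⟨by simpa using fun i => (j₀.succAbove_ne i).symm, j₀.succAbove_right_injective⟩
  have hbij := Finite.injective_iff_bijective.mp hinj
  have hcomp : f ∘ ⇑(Equiv.ofBijective _ hbij : Equiv.Perm (Fin (n+1)))
      = Fin.cons (f j₀) (f ∘ j₀.succAbove) := by
    funext i
    induction i using Fin.cases with
    | zero => simp [Equiv.ofBijective]
    | succ i => simp [Equiv.ofBijective]
  rw [← hcomp, XS_comp_perm]

end Stmt17

namespace Stmt17
open Finset Nat

variable {n m : ℕ}

noncomputable def Phi (p : Fin (n+1)) :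
    (Fin m × (Fin n → Fin m)) ≃ (Fin (n+1) → Fin m) :=
  (Fin.consEquiv fun _ => Fin m).trans
    (Equiv.arrowCongr (Equiv.swap 0 p) (Equiv.refl (Fin m)))

lemma Phi_apply (p : Fin (n+1)) (c : Fin m) (f : Fin n → Fin m) (x : Fin (n+1)) :
    Phi p (c, f) x = (Fin.cons c f : Fin (n+1) → Fin m) (Equiv.swap 0 p x) := by
  simp [Phi]

lemma Phi_apply_p (p : Fin (n+1)) (c : Fin m) (f : Fin n → Fin m) :
    Phi p (c, f) p = c := by
  rw [Phi_apply, Equiv.swap_apply_right, Fin.cons_zero]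

lemma Phi_comp_w (p : Fin (n+1)) (c : Fin m) (f : Fin n → Fin m) :
    (fun j => Phi p (c, f) (Equiv.swap 0 p j.succ)) = f := by
  funext j
  rw [Phi_apply, Equiv.swap_apply_self, Fin.cons_succ]

lemma step (b : Fin (n+1) → Fin m → ℝ) :
    (∑ k, b 0 k * b 0 k) * (gram fun j => b j.succ).per ≤ (gram b).per := by
  set b' : Fin n → Fin m → ℝ := fun j => b j.succ with hb'
  set v : Fin m → ℝ := b 0 with hv
  set T : Fin (n+1) → (Fin (n+1) → Fin m) → ℝ :=
    fun p g => v (g p) * XS b' (fun j => g (Equiv.swap 0 p j.succ)) with hT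
  have hgp : ∀ (p : Fin (n+1)) (c : Fin m) (f : Fin n → Fin m),
      T p (Phi p (c, f)) = v c * XS b' f := by
    intro p c f
    simp only [hT]
    rw [Phi_apply_p, Phi_comp_w]
  have diag : ∀ p, ∑ g : Fin (n+1) → Fin m, T p g * T p g
      = (∑ k, v k * v k) * ∑ f : Fin n → Fin m, XS b' f ^ 2 := by
    intro p
    rw [← Equiv.sum_comp (Phi p) (fun g => T p g * T p g), Fintype.sum_prod_type,
      Finset.sum_mul_sum]
    refine Finset.sum_congr rfl fun c _ => Finset.sum_congr rfl fun f _ => ?_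
    rw [hgp]
    ring
  have offd : ∀ p q : Fin (n+1), 0 ≤ ∑ g : Fin (n+1) → Fin m, T p g * T q g := by
    intro p q
    rcases eq_or_ne p q with rfl | hpq
    · exact Finset.sum_nonneg fun g _ => mul_self_nonneg _
    cases n with
    | zero =>
      have h1 := p.isLt
      have h2 := q.isLt
      exact absurd (Fin.ext (by omega)) hpq
    | succ n' =>
      have hr : Equiv.swap 0 p q ≠ 0 := by
        intro h
        apply hpq
        have h2 := congrArg (Equiv.swap 0 p) h
        rw [Equiv.swap_apply_self, Equiv.swap_apply_left] at h2
        exact h2.symm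
      set j₀ : Fin (n'+1) := (Equiv.swap 0 p q).pred hr with hj₀
      have hrj : j₀.succ = Equiv.swap 0 p q := Fin.succ_pred _ hr
      set u : Fin (n'+1) → Fin (n'+2) :=
        fun j => Equiv.swap 0 p (Equiv.swap 0 q j.succ) with hu
      set t : Fin (n'+1) → Fin (n'+2) :=
        Fin.cons 0 (fun i => (j₀.succAbove i).succ) with htdef
      have hui : Function.Injective u := by
        intro a c hac
        rw [hu] at hac
        exact Fin.succ_injective _
          ((Equiv.swap 0 q).injective ((Equiv.swap 0 p).injective hac))
      have hti : Function.Injective t := by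
        rw [htdef, Fin.cons_injective_iff]
        refine ⟨?_, fun a c hac => j₀.succAbove_right_injective (Fin.succ_injective _ hac)⟩
        rintro ⟨i, hi⟩
        exact (Fin.succ_ne_zero _) hi
      have hux : ∀ j, u j ≠ j₀.succ := by
        intro j h
        rw [hrj, hu] at h
        have h1 : Equiv.swap 0 q j.succ = q := (Equiv.swap 0 p).injective h
        have h2 := congrArg (Equiv.swap 0 q) h1
        rw [Equiv.swap_apply_self, Equiv.swap_apply_right] at h2
        exact Fin.succ_ne_zero _ h2
      have htx : ∀ i, t i ≠ j₀.succ := by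
        intro i
        refine Fin.cases ?_ (fun i' => ?_) i
        · rw [htdef, Fin.cons_zero]
          exact (Fin.succ_ne_zero j₀).symm
        · rw [htdef, Fin.cons_succ]
          intro h
          exact j₀.succAbove_ne i' (Fin.succ_injective _ h)
      obtain ⟨τ, hτ⟩ := exists_perm_comp hui hti (by simp) hux htx
      have hgq : ∀ (c : Fin m) (f : Fin (n'+1) → Fin m),
          T q (Phi p (c, f)) = v (f j₀) * XS b' (Fin.cons c (f ∘ j₀.succAbove)) := by
        intro c f
        simp only [hT]
        congr 1
        · rw [Phi_apply, ← hrj, Fin.cons_succ]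
        · have h3 : (fun j => Phi p (c, f) (Equiv.swap 0 q j.succ))
              = (Fin.cons c f : Fin (n'+2) → Fin m) ∘ u := by
            funext j
            rw [Phi_apply, hu]
            rfl
          rw [h3, hτ, show (Fin.cons c f : Fin (n'+2) → Fin m) ∘ (t ∘ ⇑τ)
              = ((Fin.cons c f : Fin (n'+2) → Fin m) ∘ t) ∘ ⇑τ from rfl, XS_comp_perm]
          congr 1
          funext i
          refine Fin.cases ?_ (fun i' => ?_) i
          · rw [Function.comp_apply, htdef, Fin.cons_zero, Fin.cons_zero, Fin.cons_zero]
          · rw [Function.comp_apply, htdef, Fin.cons_succ, Fin.cons_succ, Fin.cons_succ]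
            rfl
      rw [← Equiv.sum_comp (Phi p) (fun g => T p g * T q g), Fintype.sum_prod_type]
      have hrw : ∀ (c : Fin m) (f : Fin (n'+1) → Fin m),
          T p (Phi p (c, f)) * T q (Phi p (c, f))
            = (v c * XS b' (Fin.cons (f j₀) (f ∘ j₀.succAbove)))
              * (v (f j₀) * XS b' (Fin.cons c (f ∘ j₀.succAbove))) := by
        intro c f
        rw [hgp, hgq, XS_reorder b' f j₀]
      calc (0:ℝ) ≤ ∑ e : Fin n' → Fin m, (∑ c, v c * XS b' (Fin.cons c e)) ^ 2 :=
            Finset.sum_nonneg fun e _ => sq_nonneg _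
        _ = ∑ e : Fin n' → Fin m, ∑ d, ∑ c,
              (v c * XS b' (Fin.cons d e)) * (v d * XS b' (Fin.cons c e)) := by
            refine Finset.sum_congr rfl fun e _ => ?_
            rw [pow_two, Finset.sum_mul_sum]
            refine Finset.sum_congr rfl fun d _ => Finset.sum_congr rfl fun c _ => ?_
            ring
        _ = ∑ d, ∑ e : Fin n' → Fin m, ∑ c,
              (v c * XS b' (Fin.cons d e)) * (v d * XS b' (Fin.cons c e)) :=
            Finset.sum_comm
        _ = ∑ de : Fin m × (Fin n' → Fin m), ∑ c,
              (v c * XS b' (Fin.cons de.1 de.2)) * (v de.1 * XS b' (Fin.cons c de.2)) := by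
            rw [Fintype.sum_prod_type]
        _ = ∑ c, ∑ de : Fin m × (Fin n' → Fin m),
              (v c * XS b' (Fin.cons de.1 de.2)) * (v de.1 * XS b' (Fin.cons c de.2)) :=
            Finset.sum_comm
        _ = ∑ c, ∑ f : Fin (n'+1) → Fin m,
              (v c * XS b' (Fin.cons (f j₀) (f ∘ j₀.succAbove)))
                * (v (f j₀) * XS b' (Fin.cons c (f ∘ j₀.succAbove))) := by
            refine Finset.sum_congr rfl fun c _ => ?_
            rw [← Equiv.sum_comp (Fin.insertNthEquiv (fun _ => Fin m) j₀)
              (fun f => (v c * XS b' (Fin.cons (f j₀) (f ∘ j₀.succAbove)))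
                * (v (f j₀) * XS b' (Fin.cons c (f ∘ j₀.succAbove))))]
            refine Finset.sum_congr rfl fun de _ => ?_
            have h1 : (Fin.insertNthEquiv (fun _ => Fin m) j₀) de j₀ = de.1 := by
              simp
            have h2 : ((Fin.insertNthEquiv (fun _ => Fin m) j₀) de) ∘ j₀.succAbove
                = de.2 := by
              funext i; simp
            rw [h1, h2]
        _ = ∑ c, ∑ f : Fin (n'+1) → Fin m,
              T p (Phi p (c, f)) * T q (Phi p (c, f)) := by
            refine Finset.sum_congr rfl fun c _ => Finset.sum_congr rfl fun f _ => ?_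
            rw [hrw]
  -- assemble
  have key : ((n+1)! : ℝ) * (gram b).per = ∑ p, ∑ q, ∑ g : Fin (n+1) → Fin m,
      T p g * T q g := by
    calc ((n+1)! : ℝ) * (gram b).per
        = ∑ g : Fin (n+1) → Fin m, XS b g ^ 2 := (sum_XS_sq b).symm
      _ = ∑ g : Fin (n+1) → Fin m, (∑ p, T p g) ^ 2 := by
          refine Finset.sum_congr rfl fun g _ => ?_
          rw [XS_decomp b g]
      _ = ∑ g : Fin (n+1) → Fin m, ∑ p, ∑ q, T p g * T q g := by
          refine Finset.sum_congr rfl fun g _ => ?_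
          rw [pow_two, Finset.sum_mul_sum]
      _ = ∑ p, ∑ g : Fin (n+1) → Fin m, ∑ q, T p g * T q g := Finset.sum_comm
      _ = ∑ p, ∑ q, ∑ g : Fin (n+1) → Fin m, T p g * T q g :=
          Finset.sum_congr rfl fun p _ => Finset.sum_comm
  have lower : ((n+1) : ℝ) * ((∑ k, v k * v k) * ((n ! : ℝ) * (gram b').per))
      ≤ ((n+1)! : ℝ) * (gram b).per := by
    rw [key]
    have : ((n+1) : ℝ) * ((∑ k, v k * v k) * ((n ! : ℝ) * (gram b').per))
        = ∑ _p : Fin (n+1), ((∑ k, v k * v k) * ∑ f : Fin n → Fin m, XS b' f ^ 2) := by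
      rw [sum_XS_sq b', Finset.sum_const, nsmul_eq_mul, Finset.card_univ, Fintype.card_fin]
      push_cast
      ring
    rw [this]
    refine Finset.sum_le_sum fun p _ => ?_
    rw [← diag p]
    exact Finset.single_le_sum (fun q _ => offd p q) (Finset.mem_univ p)
  have hpos : (0:ℝ) < ((n+1)! : ℝ) := by positivity
  refine le_of_mul_le_mul_left ?_ hpos
  calc ((n+1)! : ℝ) * ((∑ k, v k * v k) * (gram b').per)
        = ((n+1) : ℝ) * ((∑ k, v k * v k) * ((n ! : ℝ) * (gram b').per)) := by
        rw [Nat.factorial_succ]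
        push_cast
        ring
    _ ≤ ((n+1)! : ℝ) * (gram b).per := lower

end Stmt17

namespace Stmt17
open Finset Nat

variable {n m : ℕ}

lemma gram_diag_nonneg (b : Fin n → Fin m → ℝ) (i : Fin n) : 0 ≤ gram b i i := by
  rw [gram_apply]
  exact Finset.sum_nonneg fun k _ => mul_self_nonneg _

lemma prod_diag_le_per_gram : ∀ {n : ℕ} (b : Fin n → Fin m → ℝ),
    (∏ i, gram b i i) ≤ (gram b).per := by
  intro n
  induction n with
  | zero =>
    intro b
    have h2 : (gram b).per = 1 := by
      rw [Matrix.per]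
      simp
    rw [h2]
    simp
  | succ n ih =>
    intro b
    have h0 : (0:ℝ) ≤ ∑ k, b 0 k * b 0 k := Finset.sum_nonneg fun k _ => mul_self_nonneg _
    calc ∏ i, gram b i i
        = (∑ k, b 0 k * b 0 k) * ∏ i : Fin n, gram (fun j => b j.succ) i i := by
          rw [Fin.prod_univ_succ]
          rfl
      _ ≤ (∑ k, b 0 k * b 0 k) * (gram fun j => b j.succ).per :=
          mul_le_mul_of_nonneg_left (ih _) h0
      _ ≤ (gram b).per := step b

lemma per_gram_nonneg (b : Fin n → Fin m → ℝ) : 0 ≤ (gram b).per :=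
  le_trans (Finset.prod_nonneg fun i _ => gram_diag_nonneg b i) (prod_diag_le_per_gram b)

lemma per_reindex {ι κ : Type*} [Fintype ι] [DecidableEq ι] [Fintype κ] [DecidableEq κ]
    (M : Matrix ι ι ℝ) (e : κ ≃ ι) : (M.submatrix e e).per = M.per := by
  rw [Matrix.per, Matrix.per,
    ← Equiv.sum_comp (Equiv.equivCongr e e) (fun π : ι ≃ ι => ∏ j, M j (π j))]
  refine Finset.sum_congr rfl fun σ _ => ?_
  rw [← Equiv.prod_comp e (fun j => M j ((Equiv.equivCongr e e σ) j))]
  refine Finset.prod_congr rfl fun i _ => ?_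
  simp

lemma psd_to_gram {k : ℕ} {M : Matrix (Fin k) (Fin k) ℝ} (h : M.PosSemidef) :
    ∃ b : Fin k → Fin k → ℝ, M = gram b := by
  obtain ⟨B, hB⟩ : ∃ B : Matrix (Fin k) (Fin k) ℝ, M = B.conjTranspose * B := by
    open scoped MatrixOrder Matrix.Norms.L2Operator in
    exact CStarAlgebra.nonneg_iff_eq_star_mul_self.mp h.nonneg
  refine ⟨fun i l => B l i, ?_⟩
  ext i j
  rw [hB]
  simp [gram_apply, Matrix.mul_apply, Matrix.conjTranspose_apply]

end Stmt17

/-- The permanental rank `ρ_per(A)` of an `n × n` matrix: the largest `k` such that some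
`k × k` submatrix (rows chosen by an injection `f`, columns by an injection `g`) has
nonzero permanent. -/
noncomputable def permRank {n : ℕ} {R : Type*} [CommSemiring R]
    (A : Matrix (Fin n) (Fin n) R) : ℕ :=
  sSup {k | ∃ f g : Fin k → Fin n, Function.Injective f ∧ Function.Injective g ∧
    (A.submatrix f g).per ≠ 0}

/-- The principal submatrix `A[S, S]` of `A`, with rows and columns indexed by `S`. -/
noncomputable def principalSub {n : ℕ} {R : Type*} (A : Matrix (Fin n) (Fin n) R)
    (S : Finset (Fin n)) : Matrix S S R :=
  A.submatrix Subtype.val Subtype.val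

/-- Let `A` be a positive semi-definite real symmetric `n × n` matrix.
Then `per(A) ≥ ∏ i, a_{ii} ≥ 0`; moreover `a_{ii} a_{jj} ≥ a_{ij}²` for all `i, j`, and
every principal submatrix `A[S, S]` is positive semi-definite, so `per(A[S, S]) ≥ 0`. -/
theorem posSemidef_per_properties {n : ℕ} (A : Matrix (Fin n) (Fin n) ℝ)
    (hsym : A.IsSymm) (hpsd : A.PosSemidef) :
    (∏ i, A i i) ≤ A.per ∧ 0 ≤ ∏ i, A i i ∧
    (∀ i j, A i j ^ 2 ≤ A i i * A j j) ∧
    ∀ S : Finset (Fin n), (principalSub A S).PosSemidef ∧ 0 ≤ (principalSub A S).per := by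
  obtain ⟨b, hb⟩ := Stmt17.psd_to_gram hpsd
  refine ⟨?_, ?_, ?_, ?_⟩
  · rw [hb]
    exact Stmt17.prod_diag_le_per_gram b
  · rw [hb]
    exact Finset.prod_nonneg fun i _ => Stmt17.gram_diag_nonneg b i
  · intro i j
    rw [hb]
    calc (Stmt17.gram b i j) ^ 2
        = (∑ k, b i k * b j k) ^ 2 := rfl
      _ ≤ (∑ k, b i k ^ 2) * ∑ k, b j k ^ 2 :=
          Finset.sum_mul_sq_le_sq_mul_sq Finset.univ (b i) (b j)
      _ = Stmt17.gram b i i * Stmt17.gram b j j := by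
          rw [Stmt17.gram_apply, Stmt17.gram_apply]
          simp only [pow_two]
  · intro S
    have h1 : (principalSub A S).PosSemidef := hpsd.submatrix _
    refine ⟨h1, ?_⟩
    have h2 : ((principalSub A S).submatrix
        (Fintype.equivFin {x // x ∈ S}).symm (Fintype.equivFin {x // x ∈ S}).symm).PosSemidef :=
      h1.submatrix _
    obtain ⟨c, hc⟩ := Stmt17.psd_to_gram h2
    have h3 : 0 ≤ ((principalSub A S).submatrix
        (Fintype.equivFin {x // x ∈ S}).symm (Fintype.equivFin {x // x ∈ S}).symm).per := by
      rw [hc]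
      exact Stmt17.per_gram_nonneg c
    rwa [Stmt17.per_reindex _ _] at h3
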